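/- Let f : Finset α → ℝ, let D be a finite subset of α, and let a, b be two distinct elements not in D. Suppose f(H ∪ {a, b}) = f(H) for every H ⊆ D. Then C_f(D ∪ {a}) + C_f(D ∪ {b}) + C_f(D ∪ {a, b}) = 0, where C_f(S) = Σ_{H ⊆ S} (−1)^{|S| − |H|} f(H). -/

import Mathlib

noncomputable def Cf {α : Type*} (f : Finset α → ℝ) (S : Finset α) : ℝ :=
  ∑ H ∈ S.powerset, (-1 : ℝ) ^ (S.card - H.card) * f H

lemma Cf_insert {α : Type*} [DecidableEq α] (f : Finset α → ℝ) (a : α) (S : Finset α)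
    (ha : a ∉ S) :
    Cf f (insert a S) = Cf (fun H => f (insert a H) - f H) S := by
  unfold Cf
  have hdisj : Disjoint S.powerset (S.powerset.image (insert a)) := by
    simp only [Finset.disjoint_left, Finset.mem_image, Finset.mem_powerset]
    rintro H hH ⟨K, hK, rfl⟩
    exact ha (hH (Finset.mem_insert_self a K))
  rw [Finset.powerset_insert, Finset.sum_union hdisj, Finset.sum_image]
  · have h1 : ∀ H ∈ S.powerset,
        (-1 : ℝ) ^ ((insert a S).card - H.card) * f H
          = -((-1 : ℝ) ^ (S.card - H.card) * f H) := by
      intro H hH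
      rw [Finset.mem_powerset] at hH
      rw [Finset.card_insert_of_notMem ha,
        Nat.succ_sub (Finset.card_le_card hH), pow_succ]
      ring
    have h2 : ∀ H ∈ S.powerset,
        (-1 : ℝ) ^ ((insert a S).card - (insert a H).card) * f (insert a H)
          = (-1 : ℝ) ^ (S.card - H.card) * f (insert a H) := by
      intro H hH
      rw [Finset.mem_powerset] at hH
      rw [Finset.card_insert_of_notMem ha,
        Finset.card_insert_of_notMem (fun h => ha (hH h)),
        Nat.succ_sub_succ]
    rw [Finset.sum_congr rfl h1, Finset.sum_congr rfl h2]
    rw [← Finset.sum_add_distrib]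
    apply Finset.sum_congr rfl
    intro H _
    ring
  · intro x hx y hy hxy
    rw [Finset.mem_coe, Finset.mem_powerset] at hx hy
    have h1 : a ∉ x := fun h => ha (hx h)
    have h2 : a ∉ y := fun h => ha (hy h)
    have := congrArg (fun s => Finset.erase s a) hxy
    simpa [Finset.erase_insert h1, Finset.erase_insert h2] using this

/-- Cancelling pair relation: if adding both `a` and `b` never changes the
value of `f` on subsets of `D`, then
`C_f(D ∪ {a}) + C_f(D ∪ {b}) + C_f(D ∪ {a, b}) = 0`. -/
theorem Cf_pair_relation {α : Type*} [DecidableEq α] (f : Finset α → ℝ)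
    (D : Finset α) (a b : α) (hab : a ≠ b) (ha : a ∉ D) (hb : b ∉ D)
    (hf : ∀ H ⊆ D, f (insert a (insert b H)) = f H) :
    Cf f (insert a D) + Cf f (insert b D) + Cf f (insert a (insert b D)) = 0 := by
  have haD : a ∉ insert b D := by simp [hab, ha]
  rw [Cf_insert f a D ha, Cf_insert f b D hb, Cf_insert f a (insert b D) haD,
    Cf_insert _ b D hb]
  unfold Cf
  rw [← Finset.sum_add_distrib, ← Finset.sum_add_distrib]
  apply Finset.sum_eq_zero
  intro H hH
  rw [Finset.mem_powerset] at hH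
  have := hf H hH
  simp only [this]
  ring
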